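/- arXiv:2305.14664 — 3 statements merged into one kernel-verified Lean document; each statement's English description precedes it below -/
import Mathlib

section
/- The function Φ is differentiable on ℝ and its derivative is given by the termwise-differentiated series Φ′(x) = Σ_{n=1}^∞ (30π²n⁴e^{9x/2} − 15πn²e^{5x/2} − 8π³n⁶e^{13x/2}) exp(−πn²e^{2x}) for every x ∈ ℝ. -/
open Real

lemma aux_summable (a : ℝ) (ha : 0 < a) (k : ℕ) :
    Summable (fun n : ℕ => ((n : ℝ) + 1) ^ k * Real.exp (-a * ((n : ℝ) + 1) ^ 2)) := by
  have hr : ‖Real.exp (-a)‖ < 1 := by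
    rw [Real.norm_eq_abs, abs_of_pos (Real.exp_pos _)]
    exact Real.exp_lt_one_iff.2 (by linarith)
  have h := (summable_pow_mul_geometric_of_norm_lt_one k hr :
      Summable fun n : ℕ => (n : ℝ) ^ k * Real.exp (-a) ^ n)
  have h2 := h.comp_injective Nat.succ_injective
  refine h2.of_nonneg_of_le (fun n => by positivity) (fun n => ?_)
  simp only [Function.comp, Nat.succ_eq_add_one]
  push_cast
  have key : Real.exp (-a * ((n : ℝ) + 1) ^ 2) ≤ Real.exp (-a) ^ (n + 1) := by
    have : Real.exp (-a) ^ (n+1) = Real.exp (-a * (n+1)) := by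
      rw [← Real.exp_nat_mul]; congr 1; push_cast; ring
    rw [this, Real.exp_le_exp]
    have h1 : (0:ℝ) ≤ (n:ℝ) := n.cast_nonneg
    nlinarith [mul_nonneg (mul_nonneg ha.le (by linarith : (0:ℝ) ≤ (n:ℝ)+1)) h1]
  exact mul_le_mul_of_nonneg_left key (by positivity)

lemma aux_deriv (n : ℕ) (x : ℝ) :
    HasDerivAt (fun y => (4 * π ^ 2 * ((n : ℝ) + 1) ^ 4 * Real.exp (9 * y / 2)
        - 6 * π * ((n : ℝ) + 1) ^ 2 * Real.exp (5 * y / 2))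
      * Real.exp (-π * ((n : ℝ) + 1) ^ 2 * Real.exp (2 * y)))
      ((30 * π ^ 2 * ((n : ℝ) + 1) ^ 4 * Real.exp (9 * x / 2)
          - 15 * π * ((n : ℝ) + 1) ^ 2 * Real.exp (5 * x / 2)
          - 8 * π ^ 3 * ((n : ℝ) + 1) ^ 6 * Real.exp (13 * x / 2))
        * Real.exp (-π * ((n : ℝ) + 1) ^ 2 * Real.exp (2 * x))) x := by
  have h9 : HasDerivAt (fun y : ℝ => Real.exp (9 * y / 2)) (Real.exp (9 * x / 2) * (9 / 2)) x := by
    have h : HasDerivAt (fun y : ℝ => 9 * y / 2) (9 / 2) x := by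
      simpa using ((hasDerivAt_id x).const_mul (9:ℝ)).div_const 2
    exact h.exp
  have h5 : HasDerivAt (fun y : ℝ => Real.exp (5 * y / 2)) (Real.exp (5 * x / 2) * (5 / 2)) x := by
    have h : HasDerivAt (fun y : ℝ => 5 * y / 2) (5 / 2) x := by
      simpa using ((hasDerivAt_id x).const_mul (5:ℝ)).div_const 2
    exact h.exp
  have h2 : HasDerivAt (fun y : ℝ => Real.exp (2 * y)) (Real.exp (2 * x) * 2) x := by
    have h : HasDerivAt (fun y : ℝ => 2 * y) (2:ℝ) x := by
      simpa using (hasDerivAt_id x).const_mul (2:ℝ)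
    exact h.exp
  have hE : HasDerivAt (fun y : ℝ => Real.exp (-π * ((n : ℝ) + 1) ^ 2 * Real.exp (2 * y)))
      (Real.exp (-π * ((n : ℝ) + 1) ^ 2 * Real.exp (2 * x))
        * (-π * ((n : ℝ) + 1) ^ 2 * (Real.exp (2 * x) * 2))) x :=
    (h2.const_mul (-π * ((n : ℝ) + 1) ^ 2)).exp
  have hA : HasDerivAt (fun y : ℝ => 4 * π ^ 2 * ((n : ℝ) + 1) ^ 4 * Real.exp (9 * y / 2)
      - 6 * π * ((n : ℝ) + 1) ^ 2 * Real.exp (5 * y / 2))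
      (4 * π ^ 2 * ((n : ℝ) + 1) ^ 4 * (Real.exp (9 * x / 2) * (9 / 2))
        - 6 * π * ((n : ℝ) + 1) ^ 2 * (Real.exp (5 * x / 2) * (5 / 2))) x :=
    (h9.const_mul _).sub (h5.const_mul _)
  have := hA.mul hE
  refine this.congr_deriv ?_
  have e1 : Real.exp (9 * x / 2) = Real.exp (x / 2) ^ 9 := by
    rw [← Real.exp_nat_mul]; congr 1; push_cast; ring
  have e2 : Real.exp (5 * x / 2) = Real.exp (x / 2) ^ 5 := by
    rw [← Real.exp_nat_mul]; congr 1; push_cast; ring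
  have e3 : Real.exp (2 * x) = Real.exp (x / 2) ^ 4 := by
    rw [← Real.exp_nat_mul]; congr 1; push_cast; ring
  have e4 : Real.exp (13 * x / 2) = Real.exp (x / 2) ^ 13 := by
    rw [← Real.exp_nat_mul]; congr 1; push_cast; ring
  rw [e1, e2, e3, e4]; ring

/-- The Fourier kernel of the Riemann Xi function:
`Φ(x) = Σ_{n=1}^∞ (4π²n⁴e^{9x/2} − 6πn²e^{5x/2}) exp(−πn²e^{2x})`. -/
noncomputable def RiemannPhi (x : ℝ) : ℝ :=
  ∑' n : ℕ, (4 * π ^ 2 * ((n : ℝ) + 1) ^ 4 * Real.exp (9 * x / 2)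
      - 6 * π * ((n : ℝ) + 1) ^ 2 * Real.exp (5 * x / 2))
    * Real.exp (-π * ((n : ℝ) + 1) ^ 2 * Real.exp (2 * x))

set_option maxHeartbeats 1000000 in
theorem phi_differentiable_deriv_series :
    Differentiable ℝ RiemannPhi ∧
    ∀ x : ℝ, deriv RiemannPhi x =
      ∑' n : ℕ, (30 * π ^ 2 * ((n : ℝ) + 1) ^ 4 * Real.exp (9 * x / 2)
          - 15 * π * ((n : ℝ) + 1) ^ 2 * Real.exp (5 * x / 2)
          - 8 * π ^ 3 * ((n : ℝ) + 1) ^ 6 * Real.exp (13 * x / 2))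
        * Real.exp (-π * ((n : ℝ) + 1) ^ 2 * Real.exp (2 * x)) := by
  have main : ∀ x : ℝ, HasDerivAt RiemannPhi
      (∑' n : ℕ, (30 * π ^ 2 * ((n : ℝ) + 1) ^ 4 * Real.exp (9 * x / 2)
          - 15 * π * ((n : ℝ) + 1) ^ 2 * Real.exp (5 * x / 2)
          - 8 * π ^ 3 * ((n : ℝ) + 1) ^ 6 * Real.exp (13 * x / 2))
        * Real.exp (-π * ((n : ℝ) + 1) ^ 2 * Real.exp (2 * x))) x := by
    intro x
    set K : ℝ := 30 * π ^ 2 * Real.exp (9 * (x+1) / 2) + 15 * π * Real.exp (5 * (x+1) / 2)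
        + 8 * π ^ 3 * Real.exp (13 * (x+1) / 2) with hK
    have ha : (0:ℝ) < π * Real.exp (2 * (x - 1)) := by positivity
    have hu : Summable (fun n : ℕ => K * (((n : ℝ) + 1) ^ 6
        * Real.exp (-(π * Real.exp (2 * (x - 1))) * ((n : ℝ) + 1) ^ 2))) :=
      (aux_summable _ ha 6).mul_left K
    have hf0 : Summable (fun n : ℕ =>
        (4 * π ^ 2 * ((n : ℝ) + 1) ^ 4 * Real.exp (9 * x / 2)
          - 6 * π * ((n : ℝ) + 1) ^ 2 * Real.exp (5 * x / 2))
        * Real.exp (-π * ((n : ℝ) + 1) ^ 2 * Real.exp (2 * x))) := by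
      have hs := (aux_summable (π * Real.exp (2 * x)) (by positivity) 4).mul_left
        (4 * π ^ 2 * Real.exp (9 * x / 2) + 6 * π * Real.exp (5 * x / 2))
      refine hs.of_norm_bounded (fun n => ?_)
      have hA1 : (1:ℝ) ≤ (n : ℝ) + 1 := by
        have := n.cast_nonneg (α := ℝ); linarith
      have hEeq : Real.exp (-π * ((n : ℝ) + 1) ^ 2 * Real.exp (2 * x))
          = Real.exp (-(π * Real.exp (2 * x)) * ((n : ℝ) + 1) ^ 2) := by congr 1; ring
      rw [norm_mul, Real.norm_eq_abs, Real.norm_eq_abs, abs_of_pos (Real.exp_pos _), hEeq]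
      have hP : |4 * π ^ 2 * ((n : ℝ) + 1) ^ 4 * Real.exp (9 * x / 2)
          - 6 * π * ((n : ℝ) + 1) ^ 2 * Real.exp (5 * x / 2)|
          ≤ (4 * π ^ 2 * Real.exp (9 * x / 2) + 6 * π * Real.exp (5 * x / 2))
            * ((n : ℝ) + 1) ^ 4 := by
        have h1 : (0:ℝ) ≤ 4 * π ^ 2 * ((n : ℝ) + 1) ^ 4 * Real.exp (9 * x / 2) := by positivity
        have h2 : (0:ℝ) ≤ 6 * π * ((n : ℝ) + 1) ^ 2 * Real.exp (5 * x / 2) := by positivity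
        have h3 : ((n : ℝ) + 1) ^ 2 ≤ ((n : ℝ) + 1) ^ 4 :=
          pow_le_pow_right₀ hA1 (by norm_num)
        have h4 : 6 * π * Real.exp (5 * x / 2) * (((n:ℝ)+1) ^ 2)
            ≤ 6 * π * Real.exp (5 * x / 2) * (((n:ℝ)+1) ^ 4) :=
          mul_le_mul_of_nonneg_left h3 (by positivity)
        rw [abs_le]
        constructor <;> nlinarith [h4]
      calc |4 * π ^ 2 * ((n : ℝ) + 1) ^ 4 * Real.exp (9 * x / 2)
            - 6 * π * ((n : ℝ) + 1) ^ 2 * Real.exp (5 * x / 2)|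
            * Real.exp (-(π * Real.exp (2 * x)) * ((n : ℝ) + 1) ^ 2)
          ≤ ((4 * π ^ 2 * Real.exp (9 * x / 2) + 6 * π * Real.exp (5 * x / 2))
              * ((n : ℝ) + 1) ^ 4)
            * Real.exp (-(π * Real.exp (2 * x)) * ((n : ℝ) + 1) ^ 2) :=
            mul_le_mul_of_nonneg_right hP (Real.exp_pos _).le
        _ = (4 * π ^ 2 * Real.exp (9 * x / 2) + 6 * π * Real.exp (5 * x / 2))
            * (((n : ℝ) + 1) ^ 4 * Real.exp (-(π * Real.exp (2 * x)) * ((n : ℝ) + 1) ^ 2)) := by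
            ring
    have key := hasDerivAt_tsum_of_isPreconnected hu isOpen_Ioo
      (convex_Ioo (x-1) (x+1)).isPreconnected
      (fun n y _ => aux_deriv n y)
      (fun n y hy => ?_) (show x ∈ Set.Ioo (x-1) (x+1) by constructor <;> linarith)
      hf0 (show x ∈ Set.Ioo (x-1) (x+1) by constructor <;> linarith)
    · exact key
    · -- the bound
      obtain ⟨hy1, hy2⟩ := hy
      have hA1 : (1:ℝ) ≤ (n : ℝ) + 1 := by
        have := n.cast_nonneg (α := ℝ); linarith
      rw [norm_mul, Real.norm_eq_abs, Real.norm_eq_abs, abs_of_pos (Real.exp_pos _)]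
      have hEb : Real.exp (-π * ((n : ℝ) + 1) ^ 2 * Real.exp (2 * y))
          ≤ Real.exp (-(π * Real.exp (2 * (x - 1))) * ((n : ℝ) + 1) ^ 2) := by
        rw [Real.exp_le_exp]
        have hee : Real.exp (2 * (x - 1)) ≤ Real.exp (2 * y) :=
          Real.exp_le_exp.2 (by linarith)
        nlinarith [mul_le_mul_of_nonneg_left hee
          (show (0:ℝ) ≤ π * ((n:ℝ)+1) ^ 2 by positivity)]
      have hP : |30 * π ^ 2 * ((n : ℝ) + 1) ^ 4 * Real.exp (9 * y / 2)
          - 15 * π * ((n : ℝ) + 1) ^ 2 * Real.exp (5 * y / 2)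
          - 8 * π ^ 3 * ((n : ℝ) + 1) ^ 6 * Real.exp (13 * y / 2)|
          ≤ K * ((n : ℝ) + 1) ^ 6 := by
        have h24 : ((n : ℝ) + 1) ^ 2 ≤ ((n : ℝ) + 1) ^ 6 := pow_le_pow_right₀ hA1 (by norm_num)
        have h46 : ((n : ℝ) + 1) ^ 4 ≤ ((n : ℝ) + 1) ^ 6 := pow_le_pow_right₀ hA1 (by norm_num)
        have e9 : Real.exp (9 * y / 2) ≤ Real.exp (9 * (x+1) / 2) :=
          Real.exp_le_exp.2 (by linarith)
        have e5 : Real.exp (5 * y / 2) ≤ Real.exp (5 * (x+1) / 2) :=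
          Real.exp_le_exp.2 (by linarith)
        have e13 : Real.exp (13 * y / 2) ≤ Real.exp (13 * (x+1) / 2) :=
          Real.exp_le_exp.2 (by linarith)
        have p1 : (0:ℝ) ≤ 30 * π ^ 2 * ((n : ℝ) + 1) ^ 4 * Real.exp (9 * y / 2) := by positivity
        have p2 : (0:ℝ) ≤ 15 * π * ((n : ℝ) + 1) ^ 2 * Real.exp (5 * y / 2) := by positivity
        have p3 : (0:ℝ) ≤ 8 * π ^ 3 * ((n : ℝ) + 1) ^ 6 * Real.exp (13 * y / 2) := by positivity
        have step : |30 * π ^ 2 * ((n : ℝ) + 1) ^ 4 * Real.exp (9 * y / 2)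
            - 15 * π * ((n : ℝ) + 1) ^ 2 * Real.exp (5 * y / 2)
            - 8 * π ^ 3 * ((n : ℝ) + 1) ^ 6 * Real.exp (13 * y / 2)|
            ≤ 30 * π ^ 2 * ((n : ℝ) + 1) ^ 4 * Real.exp (9 * y / 2)
            + 15 * π * ((n : ℝ) + 1) ^ 2 * Real.exp (5 * y / 2)
            + 8 * π ^ 3 * ((n : ℝ) + 1) ^ 6 * Real.exp (13 * y / 2) := by
          rw [abs_le]; constructor <;> linarith
        refine step.trans ?_
        rw [hK]
        have b1 : 30 * π ^ 2 * ((n : ℝ) + 1) ^ 4 * Real.exp (9 * y / 2)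
            ≤ 30 * π ^ 2 * ((n : ℝ) + 1) ^ 6 * Real.exp (9 * (x+1) / 2) := by
          gcongr
        have b2 : 15 * π * ((n : ℝ) + 1) ^ 2 * Real.exp (5 * y / 2)
            ≤ 15 * π * ((n : ℝ) + 1) ^ 6 * Real.exp (5 * (x+1) / 2) := by
          gcongr
        have b3 : 8 * π ^ 3 * ((n : ℝ) + 1) ^ 6 * Real.exp (13 * y / 2)
            ≤ 8 * π ^ 3 * ((n : ℝ) + 1) ^ 6 * Real.exp (13 * (x+1) / 2) := by
          gcongr
        linarith [b1, b2, b3]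
      calc |30 * π ^ 2 * ((n : ℝ) + 1) ^ 4 * Real.exp (9 * y / 2)
            - 15 * π * ((n : ℝ) + 1) ^ 2 * Real.exp (5 * y / 2)
            - 8 * π ^ 3 * ((n : ℝ) + 1) ^ 6 * Real.exp (13 * y / 2)|
            * Real.exp (-π * ((n : ℝ) + 1) ^ 2 * Real.exp (2 * y))
          ≤ (K * ((n : ℝ) + 1) ^ 6)
            * Real.exp (-(π * Real.exp (2 * (x - 1))) * ((n : ℝ) + 1) ^ 2) := by
            have hKpos : (0:ℝ) ≤ K := by rw [hK]; positivity
            exact mul_le_mul hP hEb (Real.exp_pos _).le (by positivity)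
        _ = K * (((n : ℝ) + 1) ^ 6
            * Real.exp (-(π * Real.exp (2 * (x - 1))) * ((n : ℝ) + 1) ^ 2)) := by ring
  exact ⟨fun x => (main x).differentiableAt, fun x => (main x).deriv⟩
end

section
/- For every x ∈ ℝ, Φ(x) > 0; in particular the potential U(x) = −log Φ(x) is well defined for all real x. -/
open Real

namespace PhiAux

noncomputable def psi (k : ℕ) (t : ℝ) : ℝ :=
  ∑' n : ℕ, ((n : ℝ) + 1) ^ k * Real.exp (-π * ((n : ℝ) + 1) ^ 2 * t)

lemma summable_psi (k : ℕ) {t : ℝ} (ht : 0 < t) :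
    Summable fun n : ℕ => ((n : ℝ) + 1) ^ k * Real.exp (-π * ((n : ℝ) + 1) ^ 2 * t) := by
  have hr : ‖Real.exp (-π * t)‖ < 1 := by
    rw [Real.norm_eq_abs, abs_of_pos (Real.exp_pos _)]
    rw [Real.exp_lt_one_iff]
    have := Real.pi_pos
    nlinarith
  have h0 : Summable fun n : ℕ => (n : ℝ) ^ k * Real.exp (-π * t) ^ n :=
    summable_pow_mul_geometric_of_norm_lt_one k hr
  have h1 : Summable fun n : ℕ => ((n : ℝ) + 1) ^ k * Real.exp (-π * t) ^ (n + 1) := by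
    have h2 := (summable_nat_add_iff 1).2 h0
    refine h2.congr fun n => ?_
    push_cast
    ring
  refine Summable.of_nonneg_of_le (fun n => by positivity) (fun n => ?_) h1
  have hn : (1 : ℝ) ≤ (n : ℝ) + 1 := by
    have : (0:ℝ) ≤ (n:ℝ) := n.cast_nonneg
    linarith
  have hexp : Real.exp (-π * ((n : ℝ) + 1) ^ 2 * t) ≤ Real.exp (-π * t) ^ (n + 1) := by
    rw [← Real.exp_nat_mul, Real.exp_le_exp]
    push_cast
    have hπ := Real.pi_pos
    nlinarith [mul_nonneg (mul_nonneg (mul_nonneg hπ.le ht.le) (by positivity : (0:ℝ) ≤ (n:ℝ)+1)) n.cast_nonneg]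
  exact mul_le_mul_of_nonneg_left hexp (by positivity)

lemma psi_pos (k : ℕ) {t : ℝ} (ht : 0 < t) : 0 < psi k t := by
  refine Summable.tsum_pos (summable_psi k ht) (fun n => by positivity) 0 (by positivity)

lemma hasDerivAt_psi (k : ℕ) {t : ℝ} (ht : 0 < t) :
    HasDerivAt (psi k) (-π * psi (k + 2) t) t := by
  have h2 : (0 : ℝ) < t / 2 := by linarith
  have hmem : t ∈ Set.Ioi (t / 2) := by
    simp only [Set.mem_Ioi]; linarith
  have hmain := hasDerivAt_tsum_of_isPreconnected
    (u := fun n : ℕ => π * (((n : ℝ) + 1) ^ (k + 2) * Real.exp (-π * ((n : ℝ) + 1) ^ 2 * (t / 2))))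
    (g := fun (n : ℕ) (y : ℝ) => ((n : ℝ) + 1) ^ k * Real.exp (-π * ((n : ℝ) + 1) ^ 2 * y))
    (g' := fun (n : ℕ) (y : ℝ) =>
      -π * (((n : ℝ) + 1) ^ (k + 2) * Real.exp (-π * ((n : ℝ) + 1) ^ 2 * y)))
    ((summable_psi (k + 2) h2).mul_left π) (isOpen_Ioi (a := t / 2)) isPreconnected_Ioi
    ?_ ?_ hmem (summable_psi k ht) hmem
  · have : ∑' n : ℕ, -π * (((n : ℝ) + 1) ^ (k + 2) * Real.exp (-π * ((n : ℝ) + 1) ^ 2 * t))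
        = -π * psi (k + 2) t := by
      rw [tsum_mul_left]; rfl
    rw [this] at hmain
    exact hmain
  · intro n y _
    have hlin : HasDerivAt (fun y : ℝ => -π * ((n : ℝ) + 1) ^ 2 * y)
        (-π * ((n : ℝ) + 1) ^ 2) y := by
      have h := (hasDerivAt_id y).const_mul (-π * ((n : ℝ) + 1) ^ 2)
      rw [mul_one] at h
      exact h
    have hexp := hlin.exp
    have := hexp.const_mul (((n : ℝ) + 1) ^ k)
    refine this.congr_deriv ?_
    ring
  · intro n y hy
    have hy' : t / 2 ≤ y := le_of_lt hy
    simp only [neg_mul, norm_neg, Real.norm_eq_abs]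
    rw [abs_of_nonneg (by positivity)]
    have hexp : Real.exp (-(π * ((n : ℝ) + 1) ^ 2 * y))
        ≤ Real.exp (-(π * ((n : ℝ) + 1) ^ 2 * (t / 2))) := by
      rw [Real.exp_le_exp]
      have h := mul_le_mul_of_nonneg_left hy' (by positivity : (0:ℝ) ≤ π * ((n:ℝ)+1)^2)
      nlinarith [h]
    have h1 := mul_le_mul_of_nonneg_left hexp
      (by positivity : (0:ℝ) ≤ ((n : ℝ) + 1) ^ (k + 2))
    exact mul_le_mul_of_nonneg_left h1 (by positivity)

noncomputable def Th (t : ℝ) : ℝ := 1 + 2 * psi 0 t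
noncomputable def Th1 (t : ℝ) : ℝ := -2 * π * psi 2 t
noncomputable def Th2 (t : ℝ) : ℝ := 2 * π ^ 2 * psi 4 t

lemma hasDerivAt_Th {t : ℝ} (ht : 0 < t) : HasDerivAt Th (Th1 t) t := by
  have h := hasDerivAt_psi 0 ht
  have h2 := (h.const_mul 2).const_add 1
  have e : Th1 t = 2 * (-π * psi (0 + 2) t) := by
    unfold Th1; rw [show (0 + 2) = 2 from rfl]; ring
  rw [e]
  exact h2

lemma hasDerivAt_Th1 {t : ℝ} (ht : 0 < t) : HasDerivAt Th1 (Th2 t) t := by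
  have h := hasDerivAt_psi 2 ht
  have h2 := h.const_mul (-2 * π)
  have e : Th2 t = -2 * π * (-π * psi (2 + 2) t) := by
    unfold Th2; rw [show (2 + 2) = 4 from rfl]; ring
  rw [e]
  exact h2

lemma hasSum_Th {t : ℝ} (ht : 0 < t) :
    HasSum (fun n : ℤ => Real.exp (-π * (n : ℝ) ^ 2 * t)) (Th t) := by
  have hpos : HasSum (fun n : ℕ => ((n : ℝ) + 1) ^ 0 * Real.exp (-π * ((n : ℝ) + 1) ^ 2 * t))
      (psi 0 t) := (summable_psi 0 ht).hasSum
  have hpos' : HasSum (fun n : ℕ => Real.exp (-π * ((n : ℝ) + 1) ^ 2 * t)) (psi 0 t) := by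
    refine hpos.congr_fun fun n => ?_
    simp
  have hnat : HasSum (fun n : ℕ => Real.exp (-π * (n : ℝ) ^ 2 * t)) (psi 0 t + 1) := by
    have hfe : (fun n : ℕ => Real.exp (-π * ((↑(n + 1) : ℝ)) ^ 2 * t))
        = (fun n : ℕ => Real.exp (-π * ((n : ℝ) + 1) ^ 2 * t)) := by
      funext n; push_cast; ring_nf
    have hpos'' : HasSum (fun n : ℕ => Real.exp (-π * ((↑(n + 1) : ℝ)) ^ 2 * t)) (psi 0 t) := by
      rw [hfe]; exact hpos'
    have h := (hasSum_nat_add_iff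
      (f := fun n : ℕ => Real.exp (-π * (n : ℝ) ^ 2 * t)) 1).1 hpos''
    simpa using h
  have hneg : HasSum (fun n : ℕ => Real.exp (-π * ((-(n + 1) : ℤ) : ℝ) ^ 2 * t)) (psi 0 t) := by
    refine hpos'.congr_fun fun n => ?_
    push_cast
    ring_nf
  have h := HasSum.of_nat_of_neg_add_one (f := fun n : ℤ => Real.exp (-π * (n : ℝ) ^ 2 * t))
    hnat hneg
  have e : Th t = psi 0 t + 1 + psi 0 t := by unfold Th; ring
  rw [e]
  exact h

lemma Th_eq {t : ℝ} (ht : 0 < t) : Th t = HurwitzZeta.evenKernel 0 t := by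
  have h1 : HasSum (fun n : ℤ => Real.exp (-π * (n : ℝ) ^ 2 * t)) (HurwitzZeta.evenKernel 0 t) := by
    have := HurwitzZeta.hasSum_int_evenKernel (0 : ℝ) ht
    simpa using this
  exact (hasSum_Th ht).unique h1

lemma Th_fe {t : ℝ} (ht : 0 < t) : Th t = t ^ (-(1/2) : ℝ) * Th t⁻¹ := by
  have h0 : (0 : ℝ) < t⁻¹ := inv_pos.2 ht
  have h := HurwitzZeta.evenKernel_functional_equation 0 t
  rw [← HurwitzZeta.evenKernel_eq_cosKernel_of_zero] at h
  rw [Th_eq ht, Th_eq h0, h, one_div t, one_div, Real.rpow_neg ht.le]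

lemma rpow_sub_two {t : ℝ} (ht : 0 < t) (a : ℝ) : t ^ a * (t ^ 2)⁻¹ = t ^ (a - 2) := by
  have h2 : (t : ℝ) ^ 2 = t ^ (2 : ℝ) := by
    norm_cast
  rw [h2, ← Real.rpow_neg ht.le, ← Real.rpow_add ht]
  congr 1

lemma hasDerivAt_Th_inv {t : ℝ} (ht : 0 < t) :
    HasDerivAt (fun s : ℝ => Th s⁻¹) (Th1 t⁻¹ * (-(t ^ 2)⁻¹)) t := by
  have h0 : (0 : ℝ) < t⁻¹ := inv_pos.2 ht
  have := (hasDerivAt_Th h0).comp t (hasDerivAt_inv ht.ne')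
  exact this

lemma hasDerivAt_Th1_inv {t : ℝ} (ht : 0 < t) :
    HasDerivAt (fun s : ℝ => Th1 s⁻¹) (Th2 t⁻¹ * (-(t ^ 2)⁻¹)) t := by
  have h0 : (0 : ℝ) < t⁻¹ := inv_pos.2 ht
  have := (hasDerivAt_Th1 h0).comp t (hasDerivAt_inv ht.ne')
  exact this

lemma Th1_fe {t : ℝ} (ht : 0 < t) :
    Th1 t = -(1/2) * t ^ (-(3/2) : ℝ) * Th t⁻¹ - t ^ (-(5/2) : ℝ) * Th1 t⁻¹ := by
  have hB : HasDerivAt (fun s : ℝ => s ^ (-(1/2) : ℝ) * Th s⁻¹)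
      (-(1/2) * t ^ (-(3/2) : ℝ) * Th t⁻¹ - t ^ (-(5/2) : ℝ) * Th1 t⁻¹) t := by
    have h1 : HasDerivAt (fun s : ℝ => s ^ (-(1/2) : ℝ))
        (-(1/2) * t ^ (-(1/2) - 1 : ℝ)) t :=
      Real.hasDerivAt_rpow_const (Or.inl ht.ne')
    have h2 := hasDerivAt_Th_inv ht
    have h3 := h1.mul h2
    refine h3.congr_deriv ?_
    have e1 : t ^ (-(1/2) - 1 : ℝ) = t ^ (-(3/2) : ℝ) := by congr 1; norm_num
    have e2 : t ^ (-(1/2) : ℝ) * (t ^ 2)⁻¹ = t ^ (-(5/2) : ℝ) := by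
      rw [rpow_sub_two ht]; congr 1; norm_num
    rw [e1]
    linear_combination (-(Th1 t⁻¹)) * e2
  have heq : (fun s : ℝ => s ^ (-(1/2) : ℝ) * Th s⁻¹) =ᶠ[nhds t] Th := by
    filter_upwards [Ioi_mem_nhds ht] with s hs
    exact (Th_fe hs).symm
  have hB' : HasDerivAt Th
      (-(1/2) * t ^ (-(3/2) : ℝ) * Th t⁻¹ - t ^ (-(5/2) : ℝ) * Th1 t⁻¹) t :=
    heq.hasDerivAt_iff.1 hB
  exact (hasDerivAt_Th ht).unique hB'

lemma Th2_fe {t : ℝ} (ht : 0 < t) :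
    Th2 t = (3/4) * t ^ (-(5/2) : ℝ) * Th t⁻¹ + 3 * t ^ (-(7/2) : ℝ) * Th1 t⁻¹
      + t ^ (-(9/2) : ℝ) * Th2 t⁻¹ := by
  have hB : HasDerivAt
      (fun s : ℝ => -(1/2) * s ^ (-(3/2) : ℝ) * Th s⁻¹ - s ^ (-(5/2) : ℝ) * Th1 s⁻¹)
      ((3/4) * t ^ (-(5/2) : ℝ) * Th t⁻¹ + 3 * t ^ (-(7/2) : ℝ) * Th1 t⁻¹
        + t ^ (-(9/2) : ℝ) * Th2 t⁻¹) t := by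
    have h1 : HasDerivAt (fun s : ℝ => s ^ (-(3/2) : ℝ))
        (-(3/2) * t ^ (-(3/2) - 1 : ℝ)) t :=
      Real.hasDerivAt_rpow_const (Or.inl ht.ne')
    have h3 : HasDerivAt (fun s : ℝ => s ^ (-(5/2) : ℝ))
        (-(5/2) * t ^ (-(5/2) - 1 : ℝ)) t :=
      Real.hasDerivAt_rpow_const (Or.inl ht.ne')
    have h2 := hasDerivAt_Th_inv ht
    have h4 := hasDerivAt_Th1_inv ht
    have hA := (h1.mul h2).const_mul (-(1/2) : ℝ)
    have hC := h3.mul h4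
    have h5 := hA.sub hC
    have hfun : (fun s : ℝ => -(1/2) * (s ^ (-(3/2) : ℝ) * Th s⁻¹) - s ^ (-(5/2) : ℝ) * Th1 s⁻¹)
        = (fun s : ℝ => -(1/2) * s ^ (-(3/2) : ℝ) * Th s⁻¹ - s ^ (-(5/2) : ℝ) * Th1 s⁻¹) := by
      funext s; ring
    simp only [Pi.mul_def, Pi.sub_def] at h5
    rw [hfun] at h5
    refine h5.congr_deriv ?_
    have e1 : t ^ (-(3/2) - 1 : ℝ) = t ^ (-(5/2) : ℝ) := by congr 1; norm_num
    have e2 : t ^ (-(5/2) - 1 : ℝ) = t ^ (-(7/2) : ℝ) := by congr 1; norm_num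
    have e3 : t ^ (-(3/2) : ℝ) * (t ^ 2)⁻¹ = t ^ (-(7/2) : ℝ) := by
      rw [rpow_sub_two ht]; congr 1; norm_num
    have e4 : t ^ (-(5/2) : ℝ) * (t ^ 2)⁻¹ = t ^ (-(9/2) : ℝ) := by
      rw [rpow_sub_two ht]; congr 1; norm_num
    rw [e1, e2]
    linear_combination ((1/2) * Th1 t⁻¹) * e3 + (Th2 t⁻¹) * e4
  have heq : (fun s : ℝ => -(1/2) * s ^ (-(3/2) : ℝ) * Th s⁻¹ - s ^ (-(5/2) : ℝ) * Th1 s⁻¹)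
      =ᶠ[nhds t] Th1 := by
    filter_upwards [Ioi_mem_nhds ht] with s hs
    exact (Th1_fe hs).symm
  exact (hasDerivAt_Th1 ht).unique (heq.hasDerivAt_iff.1 hB)

noncomputable def G (t : ℝ) : ℝ := 2 * t ^ ((9/4) : ℝ) * Th2 t + 3 * t ^ ((5/4) : ℝ) * Th1 t

lemma G_inv {t : ℝ} (ht : 0 < t) : G t = G t⁻¹ := by
  have i1 : (t⁻¹) ^ ((9/4) : ℝ) = t ^ (-(9/4) : ℝ) := by
    rw [Real.inv_rpow ht.le, ← Real.rpow_neg ht.le]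
  have i2 : (t⁻¹) ^ ((5/4) : ℝ) = t ^ (-(5/4) : ℝ) := by
    rw [Real.inv_rpow ht.le, ← Real.rpow_neg ht.le]
  have m1 : t ^ ((9/4) : ℝ) * t ^ (-(5/2) : ℝ) = t ^ (-(1/4) : ℝ) := by
    rw [← Real.rpow_add ht]; congr 1; norm_num
  have m2 : t ^ ((9/4) : ℝ) * t ^ (-(7/2) : ℝ) = t ^ (-(5/4) : ℝ) := by
    rw [← Real.rpow_add ht]; congr 1; norm_num
  have m3 : t ^ ((9/4) : ℝ) * t ^ (-(9/2) : ℝ) = t ^ (-(9/4) : ℝ) := by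
    rw [← Real.rpow_add ht]; congr 1; norm_num
  have m4 : t ^ ((5/4) : ℝ) * t ^ (-(3/2) : ℝ) = t ^ (-(1/4) : ℝ) := by
    rw [← Real.rpow_add ht]; congr 1; norm_num
  have m5 : t ^ ((5/4) : ℝ) * t ^ (-(5/2) : ℝ) = t ^ (-(5/4) : ℝ) := by
    rw [← Real.rpow_add ht]; congr 1; norm_num
  unfold G
  rw [Th1_fe ht, Th2_fe ht, i1, i2]
  linear_combination (3/2 * Th t⁻¹) * m1 + (6 * Th1 t⁻¹) * m2 + (2 * Th2 t⁻¹) * m3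
    + (-(3/2) * Th t⁻¹) * m4 + (-3 * Th1 t⁻¹) * m5

lemma phi_eq (x : ℝ) : RiemannPhi x = G (Real.exp (2 * x)) := by
  have ht : (0 : ℝ) < Real.exp (2 * x) := Real.exp_pos _
  have e94 : Real.exp (2 * x) ^ ((9/4) : ℝ) = Real.exp (9 * x / 2) := by
    rw [← Real.exp_log ht, ← Real.exp_mul, Real.log_exp]
    congr 1; ring
  have e54 : Real.exp (2 * x) ^ ((5/4) : ℝ) = Real.exp (5 * x / 2) := by
    rw [← Real.exp_log ht, ← Real.exp_mul, Real.log_exp]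
    congr 1; ring
  have h4 := (summable_psi 4 ht).mul_left (4 * π ^ 2 * Real.exp (9 * x / 2))
  have h2 := (summable_psi 2 ht).mul_left (6 * π * Real.exp (5 * x / 2))
  calc RiemannPhi x
      = ∑' n : ℕ, ((4 * π ^ 2 * Real.exp (9 * x / 2)) *
          (((n : ℝ) + 1) ^ 4 * Real.exp (-π * ((n : ℝ) + 1) ^ 2 * Real.exp (2 * x)))
        - (6 * π * Real.exp (5 * x / 2)) *
          (((n : ℝ) + 1) ^ 2 * Real.exp (-π * ((n : ℝ) + 1) ^ 2 * Real.exp (2 * x)))) := by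
        unfold RiemannPhi
        congr 1
        funext n
        ring
    _ = (4 * π ^ 2 * Real.exp (9 * x / 2)) * psi 4 (Real.exp (2 * x))
        - (6 * π * Real.exp (5 * x / 2)) * psi 2 (Real.exp (2 * x)) := by
        rw [Summable.tsum_sub h4 h2, tsum_mul_left, tsum_mul_left]
        rfl
    _ = G (Real.exp (2 * x)) := by
        unfold G Th1 Th2
        rw [e94, e54]
        ring

lemma G_pos_of_one_le {t : ℝ} (ht : 1 ≤ t) : 0 < G t := by
  have ht0 : (0 : ℝ) < t := lt_of_lt_of_le one_pos ht
  have hψ2 : psi 2 t ≤ psi 4 t := by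
    refine Summable.tsum_le_tsum (fun n => ?_) (summable_psi 2 ht0) (summable_psi 4 ht0)
    have hn : (1 : ℝ) ≤ (n : ℝ) + 1 := by
      have : (0:ℝ) ≤ (n:ℝ) := n.cast_nonneg
      linarith
    have := pow_le_pow_right₀ hn (by norm_num : 2 ≤ 4)
    exact mul_le_mul_of_nonneg_right this (Real.exp_pos _).le
  have hψ4 : 0 < psi 4 t := psi_pos 4 ht0
  have hψ2pos : 0 < psi 2 t := psi_pos 2 ht0
  have hG : G t = 4 * π ^ 2 * t ^ ((9/4) : ℝ) * psi 4 t
      - 6 * π * t ^ ((5/4) : ℝ) * psi 2 t := by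
    unfold G Th1 Th2; ring
  rw [hG]
  have hπ := Real.pi_gt_three
  have hrp : t ^ ((5/4) : ℝ) ≤ t ^ ((9/4) : ℝ) :=
    Real.rpow_le_rpow_of_exponent_le ht (by norm_num)
  have hrp0 : (0 : ℝ) < t ^ ((5/4) : ℝ) := Real.rpow_pos_of_pos ht0 _
  have hrp0' : (0 : ℝ) < t ^ ((9/4) : ℝ) := Real.rpow_pos_of_pos ht0 _
  have h1 : 6 * π * t ^ ((5/4) : ℝ) * psi 2 t ≤ 6 * π * t ^ ((5/4) : ℝ) * psi 4 t := by
    have : (0:ℝ) ≤ 6 * π * t ^ ((5/4) : ℝ) := by positivity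
    exact mul_le_mul_of_nonneg_left hψ2 this
  have h2 : 6 * π * t ^ ((5/4) : ℝ) * psi 4 t < 4 * π ^ 2 * t ^ ((9/4) : ℝ) * psi 4 t := by
    apply mul_lt_mul_of_pos_right _ hψ4
    calc 6 * π * t ^ ((5/4) : ℝ) ≤ 6 * π * t ^ ((9/4) : ℝ) := by
          apply mul_le_mul_of_nonneg_left hrp (by positivity)
      _ < 4 * π ^ 2 * t ^ ((9/4) : ℝ) := by
          apply mul_lt_mul_of_pos_right _ hrp0'
          nlinarith
  linarith

end PhiAux

theorem phi_pos (x : ℝ) : 0 < RiemannPhi x := by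
  rw [PhiAux.phi_eq]
  set t := Real.exp (2 * x) with htdef
  have ht0 : (0 : ℝ) < t := Real.exp_pos _
  rcases le_or_gt 1 t with h | h
  · exact PhiAux.G_pos_of_one_le h
  · rw [PhiAux.G_inv ht0]
    refine PhiAux.G_pos_of_one_le ?_
    have h1 : t * t⁻¹ = 1 := mul_inv_cancel₀ ht0.ne'
    nlinarith [mul_pos (inv_pos.2 ht0) (by linarith : (0:ℝ) < 1 - t), h1]
end

section
/- Let V be a polynomial with complex coefficients satisfying V(1) = 0 and let g be a nonzero complex number; for each natural number N define Q_N(y) = (−g)^N · (d^N/da^N)[exp(−(V(a+1) − a·y)/g)] evaluated at a = 0. Then y ↦ Q_N(y) is a polynomial function of degree exactly N with leading coefficient (−1)^N; that is, there exists a polynomial P of degree N and leading coefficient (−1)^N with P(y) = Q_N(y) for all y ∈ ℂ. -/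
open Finset Polynomial

private lemma polyEval_contDiff (p : Polynomial ℂ) :
    ContDiff ℂ ⊤ (fun x : ℂ => p.eval x) := by
  induction p using Polynomial.induction_on' with
  | add p q hp hq => simpa [Polynomial.eval_add] using hp.add hq
  | monomial n a =>
      simpa [Polynomial.eval_monomial] using
        (contDiff_const (c := a)).mul (contDiff_id.pow n)

private lemma leibniz_exp (h : ℂ → ℂ)
    (hd : ∀ k : ℕ, Differentiable ℂ (iteratedDeriv k h)) (c : ℂ) :
    ∀ n : ℕ, ∀ a : ℂ, iteratedDeriv n (fun a => h a * Complex.exp (c * a)) a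
      = ∑ k ∈ Finset.range (n + 1),
          (n.choose k : ℂ) * iteratedDeriv k h a * c ^ (n - k) * Complex.exp (c * a) := by
  intro n
  induction n with
  | zero => intro a; simp
  | succ n ih =>
    intro a
    have hEd : ∀ b : ℂ, HasDerivAt (fun x => Complex.exp (c * x))
        (c * Complex.exp (c * b)) b := by
      intro b
      simpa [mul_comm] using (((hasDerivAt_id b).const_mul c).cexp)
    have hfun : iteratedDeriv n (fun a => h a * Complex.exp (c * a))
        = fun b => ∑ k ∈ Finset.range (n + 1),
            ((n.choose k : ℂ) * c ^ (n - k)) * (iteratedDeriv k h b * Complex.exp (c * b)) := by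
      funext b
      rw [ih b]
      exact Finset.sum_congr rfl fun k _ => by ring
    have hterm : ∀ k ∈ Finset.range (n + 1), ∀ b : ℂ,
        HasDerivAt (fun x => ((n.choose k : ℂ) * c ^ (n - k)) *
            (iteratedDeriv k h x * Complex.exp (c * x)))
          (((n.choose k : ℂ) * c ^ (n - k)) *
            (iteratedDeriv (k + 1) h b * Complex.exp (c * b)
              + iteratedDeriv k h b * (c * Complex.exp (c * b)))) b := by
      intro k _ b
      have h1 : HasDerivAt (iteratedDeriv k h) (iteratedDeriv (k + 1) h b) b := by
        rw [iteratedDeriv_succ]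
        exact ((hd k) b).hasDerivAt
      exact ((h1.mul (hEd b))).const_mul _
    have hsum : HasDerivAt (fun b => ∑ k ∈ Finset.range (n + 1),
        ((n.choose k : ℂ) * c ^ (n - k)) * (iteratedDeriv k h b * Complex.exp (c * b)))
        (∑ k ∈ Finset.range (n + 1), ((n.choose k : ℂ) * c ^ (n - k)) *
            (iteratedDeriv (k + 1) h a * Complex.exp (c * a)
              + iteratedDeriv k h a * (c * Complex.exp (c * a)))) a :=
      HasDerivAt.fun_sum fun k hk => hterm k hk a
    rw [iteratedDeriv_succ, hfun, hsum.deriv]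
    have split : (∑ k ∈ Finset.range (n + 1), ((n.choose k : ℂ) * c ^ (n - k)) *
            (iteratedDeriv (k + 1) h a * Complex.exp (c * a)
              + iteratedDeriv k h a * (c * Complex.exp (c * a))))
        = (∑ k ∈ Finset.range (n + 1), (n.choose k : ℂ) *
              (iteratedDeriv k h a * c ^ (n + 1 - k) * Complex.exp (c * a)))
          + ∑ k ∈ Finset.range (n + 1), (n.choose k : ℂ) *
              (iteratedDeriv (k + 1) h a * c ^ (n - k) * Complex.exp (c * a)) := by
      rw [← Finset.sum_add_distrib]
      refine Finset.sum_congr rfl fun k hk => ?_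
      have hkn : k ≤ n := Nat.lt_succ_iff.mp (Finset.mem_range.mp hk)
      have : n + 1 - k = (n - k) + 1 := by omega
      rw [this]
      ring
    rw [split, ← Finset.sum_choose_succ_mul
      (fun i j => iteratedDeriv i h a * c ^ j * Complex.exp (c * a)) n]
    exact (Finset.sum_congr rfl fun k _ => by ring).symm

theorem two_matrix_model_Q_is_monic_poly (V : Polynomial ℂ) (hV : V.eval 1 = 0)
    (g : ℂ) (hg : g ≠ 0) (N : ℕ)
    (Q : ℂ → ℂ)
    (hQ : ∀ y : ℂ, Q y = (-g) ^ N *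
      iteratedDeriv N (fun a : ℂ => Complex.exp (-(V.eval (a + 1) - a * y) / g)) 0) :
    ∃ P : Polynomial ℂ, P.degree = N ∧ P.leadingCoeff = (-1) ^ N ∧
      ∀ y : ℂ, P.eval y = Q y := by
  set h : ℂ → ℂ := fun a => Complex.exp (-(V.eval (a + 1)) / g) with hh_def
  have hcd : ContDiff ℂ ⊤ h := by
    have h2 : ContDiff ℂ ⊤ (fun a : ℂ => a + 1) := contDiff_id.add contDiff_const
    have h1 : ContDiff ℂ ⊤ (fun a : ℂ => V.eval (a + 1)) := (polyEval_contDiff V).comp h2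
    exact Complex.contDiff_exp.comp ((h1.neg).div_const g)
  have hd : ∀ k : ℕ, Differentiable ℂ (iteratedDeriv k h) := fun k =>
    hcd.differentiable_iteratedDeriv k (by
      exact_mod_cast WithTop.coe_lt_top (k : ℕ∞))
  -- d_k := iteratedDeriv k h 0
  have hd0 : iteratedDeriv 0 h 0 = 1 := by
    simp [hh_def, hV]
  -- the polynomial
  set P : Polynomial ℂ := ∑ k ∈ Finset.range (N + 1),
      Polynomial.C ((-g) ^ N * (N.choose k : ℂ) * iteratedDeriv k h 0 * (g⁻¹) ^ (N - k))
        * Polynomial.X ^ (N - k) with hP_def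
  have hcoeffN : P.coeff N = (-1) ^ N := by
    rw [hP_def, Polynomial.finset_sum_coeff]
    rw [Finset.sum_eq_single 0]
    · simp only [Nat.sub_zero, Nat.choose_zero_right, Nat.cast_one, hd0]
      rw [Polynomial.coeff_C_mul, Polynomial.coeff_X_pow]
      simp only [if_pos rfl, mul_one]
      rw [show (-g) ^ N = (-1 : ℂ) ^ N * g ^ N by rw [← neg_one_mul, mul_pow]]
      field_simp
      simp [hg]
    · intro k hk hk0
      have hkn : k ≤ N := Nat.lt_succ_iff.mp (Finset.mem_range.mp hk)
      have hne : N ≠ N - k := by omega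
      rw [Polynomial.coeff_C_mul, Polynomial.coeff_X_pow, if_neg hne, mul_zero]
    · intro hmem
      exact absurd (Finset.mem_range.mpr (Nat.succ_pos N)) hmem
  have hdegle : P.degree ≤ N := by
    rw [hP_def]
    refine (Polynomial.degree_sum_le _ _).trans ?_
    refine Finset.sup_le fun k hk => ?_
    refine (Polynomial.degree_C_mul_X_pow_le _ _).trans ?_
    exact_mod_cast Nat.cast_le.mpr (Nat.sub_le N k)
  have hcoeffne : P.coeff N ≠ 0 := by
    rw [hcoeffN]
    exact pow_ne_zero _ (by norm_num)
  have hdeg : P.degree = N := Polynomial.degree_eq_of_le_of_coeff_ne_zero hdegle hcoeffne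
  refine ⟨P, hdeg, ?_, ?_⟩
  · have hnd : P.natDegree = N := Polynomial.natDegree_eq_of_degree_eq_some hdeg
    rw [Polynomial.leadingCoeff, hnd, hcoeffN]
  · intro y
    rw [hQ y]
    have hfeq : (fun a : ℂ => Complex.exp (-(V.eval (a + 1) - a * y) / g))
        = fun a => h a * Complex.exp ((y / g) * a) := by
      funext a
      rw [hh_def]
      simp only
      rw [← Complex.exp_add]
      congr 1
      field_simp
      ring
    rw [hfeq, leibniz_exp h hd (y / g) N 0]
    simp only [mul_zero, Complex.exp_zero, mul_one]
    rw [hP_def, Polynomial.eval_finset_sum, Finset.mul_sum]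
    refine Finset.sum_congr rfl fun k _ => ?_
    simp only [Polynomial.eval_mul, Polynomial.eval_C, Polynomial.eval_pow, Polynomial.eval_X]
    rw [div_pow, div_eq_mul_inv, ← inv_pow]
    ring
end
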